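/- Let n, p, q, k be positive integers, and let f_1, …, f_p, g_1, …, g_q : ℂⁿ → ℂ be entire holomorphic functions such that the p+q functions f_1, …, f_p, g_1, …, g_q are linearly independent over ℂ. Define R : ℂⁿ × ℂⁿ → ℂ by R(z,w) = Σ_{i=1}^p f_i(z)·conj(f_i(w)) − Σ_{j=1}^q g_j(z)·conj(g_j(w)). If R ∈ 𝒫_k(ℂⁿ), then p ≥ k+1. -/

import Mathlib

open scoped ComplexOrder

/-- `R ∈ 𝒫_N(ℂⁿ)`: for all points `z_1, …, z_N ∈ ℂⁿ` and scalars `a_1, …, a_N ∈ ℂ`,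
the sum `Σ_{i,j} R(z_i, z_j) a_i conj(a_j)` is a nonnegative real number. -/
def InP {M : Type*} (N : ℕ) (R : M × M → ℂ) : Prop :=
  ∀ (z : Fin N → M) (a : Fin N → ℂ),
    0 ≤ ∑ i, ∑ j, R (z i, z j) * a i * (starRingEnd ℂ) (a j)

open Matrix in
lemma aux_diff_det {E : Type*} [NormedAddCommGroup E] [NormedSpace ℂ E]
    {ι : Type*} [Fintype ι] [DecidableEq ι] (M : E → Matrix ι ι ℂ)
    (hM : ∀ i j, Differentiable ℂ fun w => M w i j) :
    Differentiable ℂ fun w => (M w).det := by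
  simp only [Matrix.det_apply']
  apply Differentiable.fun_sum
  intro σ _
  apply Differentiable.const_mul
  intro x
  exact (HasFDerivAt.finset_prod (fun i _ => ((hM (σ i) i) x).hasFDerivAt)).differentiableAt

lemma aux_exists_det_ne {α : Type*} : ∀ (m : ℕ) (f : Fin m → α → ℂ),
    LinearIndependent ℂ f → ∃ w : Fin m → α, (Matrix.of fun l i => f l (w i)).det ≠ 0 := by
  intro m
  induction m with
  | zero =>
    intro f _
    exact ⟨fun i => i.elim0, by simp [Matrix.det_fin_zero]⟩
  | succ m ih =>
    intro f hf
    obtain ⟨w, hw⟩ := ih (fun l => f (Fin.castSucc l))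
      (hf.comp Fin.castSucc (Fin.castSucc_injective m))
    set e : Fin (m + 1) → ℂ := fun i =>
      (-1 : ℂ) ^ ((i : ℕ) + (m : ℕ)) *
        (Matrix.of fun l' j' => f (i.succAbove l') (w j')).det with he
    have hexp : ∀ w' : α,
        (Matrix.of fun l i => f l ((Fin.snoc w w' : Fin (m+1) → α) i)).det = ∑ i, e i * f i w' := by
      intro w'
      rw [Matrix.det_succ_column _ (Fin.last m)]
      refine Finset.sum_congr rfl fun i _ => ?_
      have h1 : (Matrix.of fun l i => f l ((Fin.snoc w w' : Fin (m+1) → α) i)) i (Fin.last m) = f i w' := by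
        simp [Fin.snoc_last]
      have h2 : ((Matrix.of fun l i => f l ((Fin.snoc w w' : Fin (m+1) → α) i)).submatrix i.succAbove
            (Fin.last m).succAbove) = Matrix.of fun l' j' => f (i.succAbove l') (w j') := by
        ext l' j'
        simp [Fin.succAbove_last, Fin.snoc_castSucc]
      rw [h1, h2, he]
      simp [Fin.val_last]
      ring
    have helast : e (Fin.last m) ≠ 0 := by
      rw [he]
      simp only [Fin.succAbove_last]
      intro hcontra
      rcases mul_eq_zero.mp hcontra with h | h
      · exact pow_ne_zero _ (neg_ne_zero.mpr one_ne_zero) h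
      · exact hw h
    have : ∃ w' : α, ∑ i, e i * f i w' ≠ 0 := by
      by_contra hall
      push_neg at hall
      have := Fintype.linearIndependent_iff.mp hf e ?_ (Fin.last m)
      · exact helast this
      · funext x
        simpa [Finset.sum_apply] using hall x
    obtain ⟨w', hw'⟩ := this
    exact ⟨(Fin.snoc w w' : Fin (m+1) → α), by rw [hexp w']; exact hw'⟩

open Filter Set Function Topology in
lemma aux_prop (φ ψ : ℂ → ℂ) (hφ : Differentiable ℂ φ) (hψ : Differentiable ℂ ψ)
    (hle : ∀ t, ‖φ t‖ ≤ ‖ψ t‖) (h0 : ψ 0 ≠ 0) (t : ℂ) :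
    φ t * ψ 0 = φ 0 * ψ t := by
  classical
  -- zeros of ψ are isolated
  have hne : ∀ z : ℂ, ∀ᶠ s in 𝓝[≠] z, ψ s ≠ 0 := by
    intro z
    rcases (hψ.analyticAt z).eventually_eq_zero_or_eventually_ne_zero with h | h
    · exfalso
      have hψan : AnalyticOnNhd ℂ ψ Set.univ := fun x _ => hψ.analyticAt x
      have heq : ψ =ᶠ[𝓝 z] 0 := by filter_upwards [h] with x hx; simpa using hx
      have := hψan.eqOn_zero_of_preconnected_of_eventuallyEq_zero isPreconnected_univ
        (Set.mem_univ z) heq (Set.mem_univ 0)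
      exact h0 this
    · exact h
  set u : ℂ → ℂ := fun s => φ s / ψ s with hu
  have hub : ∀ s, ψ s ≠ 0 → ‖u s‖ ≤ 1 := by
    intro s hs
    rw [hu]
    simp only [norm_div]
    rw [div_le_one (norm_pos_iff.mpr hs)]
    exact hle s
  have hud : ∀ s, ψ s ≠ 0 → DifferentiableAt ℂ u s := fun s hs => (hφ s).div (hψ s) hs
  set U : ℂ → ℂ := fun s => if ψ s = 0 then limUnder (𝓝[≠] s) u else u s with hU
  have hUdiff : Differentiable ℂ U := by
    intro z
    by_cases hz : ψ z = 0
    · -- removable singularity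
      have hs : {s : ℂ | s ≠ z → ψ s ≠ 0} ∈ 𝓝 z := eventually_nhdsWithin_iff.mp (hne z)
      have hdOn : DifferentiableOn ℂ u ({s : ℂ | s ≠ z → ψ s ≠ 0} \ {z}) := by
        intro s hsmem
        exact (hud s (hsmem.1 hsmem.2)).differentiableWithinAt
      have hbdd : BddAbove (norm ∘ u '' ({s : ℂ | s ≠ z → ψ s ≠ 0} \ {z})) := by
        refine ⟨1, ?_⟩
        rintro x ⟨s, hsmem, rfl⟩
        exact hub s (hsmem.1 hsmem.2)
      have hupd := Complex.differentiableOn_update_limUnder_of_bddAbove hs hdOn hbdd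
      have hupdz : DifferentiableAt ℂ (update u z (limUnder (𝓝[≠] z) u)) z :=
        hupd.differentiableAt hs
      have hEq : U =ᶠ[𝓝 z] update u z (limUnder (𝓝[≠] z) u) := by
        filter_upwards [hs] with s hsmem
        by_cases hsz : s = z
        · subst hsz
          simp [hU, hz, update_self]
        · have hψs : ψ s ≠ 0 := hsmem hsz
          simp [hU, hψs, update_of_ne hsz]
      exact (EventuallyEq.differentiableAt_iff hEq).mpr hupdz
    · have hEq : U =ᶠ[𝓝 z] u := by
        have : ∀ᶠ s in 𝓝 z, ψ s ≠ 0 := (hψ.continuous.continuousAt).eventually_ne hz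
        filter_upwards [this] with s hsne
        simp [hU, hsne]
      exact (EventuallyEq.differentiableAt_iff hEq).mpr (hud z hz)
  have hUb : ∀ s, ‖U s‖ ≤ 1 := by
    intro s
    by_cases hs : ψ s = 0
    · have htend : Tendsto u (𝓝[≠] s) (𝓝 (limUnder (𝓝[≠] s) u)) := by
        apply Complex.tendsto_limUnder_of_differentiable_on_punctured_nhds_of_bounded_under
        · filter_upwards [hne s] with x hx using hud x hx
        · refine ⟨1 + ‖u s‖, Filter.eventually_map.mpr ?_⟩
          filter_upwards [hne s] with x hx
          calc ‖u x - u s‖ ≤ ‖u x‖ + ‖u s‖ := norm_sub_le _ _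
            _ ≤ 1 + ‖u s‖ := by gcongr; exact hub x hx
      have hUs : U s = limUnder (𝓝[≠] s) u := by simp [hU, hs]
      rw [hUs]
      refine le_of_tendsto htend.norm ?_
      filter_upwards [hne s] with x hx using hub x hx
    · have : U s = u s := by simp [hU, hs]
      rw [this]; exact hub s hs
  have hconst : ∀ s, U s = U 0 := by
    intro s
    apply hUdiff.apply_eq_apply_of_bounded
    apply isBounded_iff_forall_norm_le.mpr
    exact ⟨1, by rintro x ⟨s', rfl⟩; exact hUb s'⟩
  have hU0 : U 0 = φ 0 / ψ 0 := by simp [hU, h0, hu]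
  by_cases ht : ψ t = 0
  · have hφt : φ t = 0 := by
      have := hle t
      rw [ht, norm_zero] at this
      exact norm_le_zero_iff.mp this
    simp [hφt, ht]
  · have h3 : U t = u t := by simp [hU, ht]
    have h2 : φ t / ψ t = φ 0 / ψ 0 := by
      calc φ t / ψ t = u t := rfl
        _ = U t := h3.symm
        _ = U 0 := hconst t
        _ = φ 0 / ψ 0 := hU0
    field_simp at h2
    linear_combination h2

open Filter Topology in
lemma aux_zero (φ ψ : ℂ → ℂ) (hφ : Continuous φ) (hψ : Differentiable ℂ ψ)
    (h : ∀ t, φ t * ψ t = 0) (h0 : ψ 0 ≠ 0) : φ 1 = 0 := by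
  by_contra h1
  have hev : ∀ᶠ s in 𝓝 (1:ℂ), φ s ≠ 0 := hφ.continuousAt.eventually_ne h1
  have heq : ψ =ᶠ[𝓝 (1:ℂ)] 0 := by
    filter_upwards [hev] with s hs
    rcases mul_eq_zero.mp (h s) with h' | h'
    · exact absurd h' hs
    · simpa using h'
  have hψan : AnalyticOnNhd ℂ ψ Set.univ := fun x _ => hψ.analyticAt x
  exact h0 (hψan.eqOn_zero_of_preconnected_of_eventuallyEq_zero isPreconnected_univ
    (Set.mem_univ 1) heq (Set.mem_univ 0))

lemma aux_InP_mono {M : Type*} {p k : ℕ} (hle : p ≤ k) (hp : 0 < p) (R : M × M → ℂ)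
    (h : InP k R) : InP p R := by
  classical
  intro z a
  set z' : Fin k → M := fun i => if h' : (i : ℕ) < p then z ⟨i, h'⟩ else z ⟨0, hp⟩ with hz'
  set a' : Fin k → ℂ := fun i => if h' : (i : ℕ) < p then a ⟨i, h'⟩ else 0 with ha'
  have key := h z' a'
  have hzc : ∀ i : Fin p, z' (Fin.castLE hle i) = z i := by
    intro i
    rw [hz']
    simp only [Fin.coe_castLE]
    rw [dif_pos i.isLt]
  have hac : ∀ i : Fin p, a' (Fin.castLE hle i) = a i := by
    intro i
    rw [ha']
    simp only [Fin.coe_castLE]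
    rw [dif_pos i.isLt]
  have hpad : ∀ b : Fin k → ℂ, (∀ i : Fin k, ¬((i : ℕ) < p) → b i = 0) →
      ∑ i, b i = ∑ i : Fin p, b (Fin.castLE hle i) := by
    intro b hb
    calc ∑ i : Fin k, b i = ∑ x ∈ Finset.univ.map (Fin.castLEEmb hle), b x := by
          symm
          apply Finset.sum_subset (Finset.subset_univ _)
          intro x _ hx
          apply hb
          intro hlt
          apply hx
          rw [Finset.mem_map]
          exact ⟨⟨(x : ℕ), hlt⟩, Finset.mem_univ _, by ext; rfl⟩
      _ = ∑ i : Fin p, b (Fin.castLE hle i) := Finset.sum_map _ _ _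
  have h1 : (∑ i : Fin k, ∑ j : Fin k, R (z' i, z' j) * a' i * (starRingEnd ℂ) (a' j))
      = ∑ i : Fin p, ∑ j : Fin p, R (z i, z j) * a i * (starRingEnd ℂ) (a j) := by
    rw [hpad _ (fun i hi => Finset.sum_eq_zero fun j _ => by
      rw [ha']; simp only [dif_neg hi]; rw [mul_zero, zero_mul])]
    refine Finset.sum_congr rfl fun i _ => ?_
    rw [hpad _ (fun j hj => by
      rw [ha']; simp only [dif_neg hj]; rw [map_zero, mul_zero])]
    refine Finset.sum_congr rfl fun j _ => ?_
    rw [hzc, hzc, hac, hac]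
  rw [h1] at key
  exact key

lemma aux_star {M : Type*} {p q N : ℕ} (f : Fin p → M → ℂ) (g : Fin q → M → ℂ)
    (R : M × M → ℂ)
    (hR : ∀ z w : M, R (z, w) =
      ∑ i, f i z * (starRingEnd ℂ) (f i w) - ∑ j, g j z * (starRingEnd ℂ) (g j w))
    (hP : InP N R) (z : Fin N → M) (a : Fin N → ℂ) :
    ∑ j, ‖∑ i, a i * g j (z i)‖ ^ 2 ≤ ∑ l, ‖∑ i, a i * f l (z i)‖ ^ 2 := by
  classical
  have hsum : ∀ {κ : Type} [Fintype κ] (F : κ → M → ℂ),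
      (∑ i, ∑ j, (∑ l, F l (z i) * (starRingEnd ℂ) (F l (z j))) * a i * (starRingEnd ℂ) (a j))
        = ((∑ l, ‖∑ i, a i * F l (z i)‖ ^ 2 : ℝ) : ℂ) := by
    intro κ _ F
    have step1 : ∀ i j : Fin N,
        (∑ l, F l (z i) * (starRingEnd ℂ) (F l (z j))) * a i * (starRingEnd ℂ) (a j)
          = ∑ l, (a i * F l (z i)) * (starRingEnd ℂ) (a j * F l (z j)) := by
      intro i j
      rw [Finset.sum_mul, Finset.sum_mul]
      refine Finset.sum_congr rfl fun l _ => ?_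
      rw [map_mul]
      ring
    simp only [step1]
    have step2 : (∑ i, ∑ j, ∑ l, (a i * F l (z i)) * (starRingEnd ℂ) (a j * F l (z j)))
        = ∑ l, ∑ i, ∑ j, (a i * F l (z i)) * (starRingEnd ℂ) (a j * F l (z j)) :=
      calc (∑ i, ∑ j, ∑ l, (a i * F l (z i)) * (starRingEnd ℂ) (a j * F l (z j)))
          = ∑ i, ∑ l, ∑ j, (a i * F l (z i)) * (starRingEnd ℂ) (a j * F l (z j)) :=
            Finset.sum_congr rfl fun i _ => Finset.sum_comm
        _ = ∑ l, ∑ i, ∑ j, (a i * F l (z i)) * (starRingEnd ℂ) (a j * F l (z j)) :=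
            Finset.sum_comm
    rw [step2]
    push_cast
    refine Finset.sum_congr rfl fun l _ => ?_
    rw [← Finset.sum_mul_sum, ← map_sum, Complex.mul_conj]
    norm_cast
    rw [Complex.normSq_eq_norm_sq]
  have h0 := hP z a
  have hE : (∑ i, ∑ j, R (z i, z j) * a i * (starRingEnd ℂ) (a j))
      = ((∑ l, ‖∑ i, a i * f l (z i)‖ ^ 2 : ℝ) : ℂ)
        - ((∑ j, ‖∑ i, a i * g j (z i)‖ ^ 2 : ℝ) : ℂ) := by
    rw [← hsum f, ← hsum g, ← Finset.sum_sub_distrib]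
    refine Finset.sum_congr rfl fun i _ => ?_
    rw [← Finset.sum_sub_distrib]
    refine Finset.sum_congr rfl fun j _ => ?_
    rw [hR, sub_mul, sub_mul]
  rw [hE, sub_nonneg] at h0
  exact_mod_cast h0

/-- Theorem 1 (main case): if `R = ‖f‖² − ‖g‖²` with `f_1, …, f_p, g_1, …, g_q`
entire and linearly independent (so `N₊(R) = p` and `N₋(R) = q ≥ 1`), and
`R ∈ 𝒫_k(ℂⁿ)`, then `p ≥ k + 1`. -/
theorem stmt5 (n p q k : ℕ) (hn : 0 < n) (hp : 0 < p) (hq : 0 < q) (hk : 0 < k)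
    (f : Fin p → (Fin n → ℂ) → ℂ) (g : Fin q → (Fin n → ℂ) → ℂ)
    (hf : ∀ i, Differentiable ℂ (f i)) (hg : ∀ j, Differentiable ℂ (g j))
    (hind : LinearIndependent ℂ (Sum.elim f g))
    (R : (Fin n → ℂ) × (Fin n → ℂ) → ℂ)
    (hR : ∀ z w : Fin n → ℂ, R (z, w) =
      ∑ i, f i z * (starRingEnd ℂ) (f i w) - ∑ j, g j z * (starRingEnd ℂ) (g j w))
    (hPk : InP k R) :
    k + 1 ≤ p := by
  classical
  by_contra hcon
  push_neg at hcon
  have hpk : p ≤ k := Nat.lt_succ_iff.mp hcon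
  obtain ⟨m, rfl⟩ : ∃ m, p = m + 1 := ⟨p - 1, (Nat.succ_pred_eq_of_pos hp).symm⟩
  have hPp : InP (m + 1) R := aux_InP_mono hpk hp R hPk
  have key := fun z a => aux_star f g R hR hPp z a
  set j0 : Fin q := ⟨0, hq⟩ with hj0
  have hindf : LinearIndependent ℂ f := hind.comp Sum.inl Sum.inl_injective
  obtain ⟨W, hW⟩ := aux_exists_det_ne (m + 1) f hindf
  set w0 : Fin m → (Fin n → ℂ) := fun j => W (Fin.castSucc j) with hw0
  set z0 : (Fin n → ℂ) := W (Fin.last m) with hz0def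
  set zz : (Fin n → ℂ) → Fin (m + 1) → (Fin n → ℂ) :=
    fun w' => (Fin.snoc w0 w' : Fin (m + 1) → (Fin n → ℂ)) with hzz
  set Mw : (Fin n → ℂ) → Matrix (Fin (m + 1)) (Fin (m + 1)) ℂ :=
    fun w' => Matrix.of fun l i => f l (zz w' i) with hMw
  set hh : (Fin n → ℂ) → ℂ := fun w' => (Mw w').det with hhh
  set Nf : Fin (m + 1) → (Fin n → ℂ) → ℂ :=
    fun i w' => ∑ m', (Matrix.adjugate (Mw w')) m' i * g j0 (zz w' m') with hNf
  -- h z0 ≠ 0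
  have hzzW : zz z0 = W := by
    rw [hzz]
    exact Fin.snoc_init_self W
  have hz0ne : hh z0 ≠ 0 := by
    rw [hhh]
    simp only [hMw, hzzW]
    exact hW
  -- differentiability of entries
  have hMdiff : ∀ l i, Differentiable ℂ fun w' => Mw w' l i := by
    intro l i
    refine Fin.lastCases ?_ ?_ i
    · have : (fun w' => Mw w' l (Fin.last m)) = f l := by
        funext w'
        simp [hMw, hzz, Fin.snoc_last]
      rw [this]; exact hf l
    · intro j
      have : (fun w' => Mw w' l (Fin.castSucc j)) = fun _ => f l (w0 j) := by
        funext w'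
        simp [hMw, hzz, Fin.snoc_castSucc]
      rw [this]; exact differentiable_const _
  have hgzdiff : ∀ m', Differentiable ℂ fun w' => g j0 (zz w' m') := by
    intro m'
    refine Fin.lastCases ?_ ?_ m'
    · have : (fun w' => g j0 (zz w' (Fin.last m))) = g j0 := by
        funext w'
        simp [hzz, Fin.snoc_last]
      rw [this]; exact hg j0
    · intro j
      have : (fun w' => g j0 (zz w' (Fin.castSucc j))) = fun _ => g j0 (w0 j) := by
        funext w'
        simp [hzz, Fin.snoc_castSucc]
      rw [this]; exact differentiable_const _
  have hhdiff : Differentiable ℂ hh := aux_diff_det Mw hMdiff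
  have hadjdiff : ∀ m' i, Differentiable ℂ fun w' => Matrix.adjugate (Mw w') m' i := by
    intro m' i
    have heq : (fun w' => Matrix.adjugate (Mw w') m' i)
        = fun w' => ((Mw w').updateRow i (Pi.single m' 1)).det := by
      funext w'
      rw [Matrix.adjugate_apply]
    rw [heq]
    apply aux_diff_det
    intro l c
    by_cases hl : l = i
    · have : (fun w' => ((Mw w').updateRow i (Pi.single m' 1)) l c)
          = fun _ => (Pi.single m' 1 : Fin (m+1) → ℂ) c := by
        funext w'
        simp [Matrix.updateRow_apply, hl]
      rw [this]; exact differentiable_const _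
    · have : (fun w' => ((Mw w').updateRow i (Pi.single m' 1)) l c)
          = fun w' => Mw w' l c := by
        funext w'
        simp [Matrix.updateRow_apply, hl]
      rw [this]; exact hMdiff l c
  have hNdiff : ∀ i, Differentiable ℂ (Nf i) := by
    intro i
    rw [hNf]
    apply Differentiable.fun_sum
    intro m' _
    exact (hadjdiff m' i).mul (hgzdiff m')
  -- the key bound
  have hbound : ∀ i w', ‖Nf i w'‖ ≤ ‖hh w'‖ := by
    intro i w'
    have hk2 := key (zz w') (fun m' => Matrix.adjugate (Mw w') m' i)
    have hRHS : (∑ l, ‖∑ m', Matrix.adjugate (Mw w') m' i * f l (zz w' m')‖ ^ 2)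
        = ‖hh w'‖ ^ 2 := by
      have h1 : ∀ l, (∑ m', Matrix.adjugate (Mw w') m' i * f l (zz w' m'))
          = (Mw w' * Matrix.adjugate (Mw w')) l i := by
        intro l
        rw [Matrix.mul_apply]
        exact Finset.sum_congr rfl fun m' _ => mul_comm _ _
      simp only [h1, Matrix.mul_adjugate, Matrix.smul_apply, Matrix.one_apply, smul_eq_mul,
        mul_ite, mul_one, mul_zero]
      have hite : ∀ l : Fin (m + 1), ‖if l = i then (Mw w').det else 0‖ ^ 2
          = if l = i then ‖(Mw w').det‖ ^ 2 else 0 := by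
        intro l; split <;> simp
      rw [Finset.sum_congr rfl fun l _ => hite l, Finset.sum_ite_eq' Finset.univ i]
      simp [hhh]
    have hLHS : ‖Nf i w'‖ ^ 2 ≤
        ∑ j, ‖∑ m', Matrix.adjugate (Mw w') m' i * g j (zz w' m')‖ ^ 2 := by
      have := Finset.single_le_sum
        (f := fun j => ‖∑ m', Matrix.adjugate (Mw w') m' i * g j (zz w' m')‖ ^ 2)
        (fun j _ => sq_nonneg _) (Finset.mem_univ j0)
      simpa [hNf] using this
    have h2 : ‖Nf i w'‖ ^ 2 ≤ ‖hh w'‖ ^ 2 := le_trans hLHS (le_trans hk2 (le_of_eq hRHS))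
    nlinarith [norm_nonneg (Nf i w'), norm_nonneg (hh w')]
  -- Liouville along lines
  have hprop : ∀ i w', Nf i w' * hh z0 = Nf i z0 * hh w' := by
    intro i w'
    set L : ℂ → (Fin n → ℂ) := fun t => z0 + t • (w' - z0) with hL
    have hLdiff : Differentiable ℂ L := by
      apply Differentiable.const_add
      exact differentiable_id.smul_const _
    have hL0 : L 0 = z0 := by simp [hL]
    have hL1 : L 1 = w' := by simp [hL]
    have := aux_prop (fun t => Nf i (L t)) (fun t => hh (L t))
      ((hNdiff i).comp hLdiff) (hhdiff.comp hLdiff)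
      (fun t => hbound i (L t)) (by show hh (L 0) ≠ 0; rw [hL0]; exact hz0ne) 1
    have h6 : Nf i (L 1) * hh (L 0) = Nf i (L 0) * hh (L 1) := this
    rwa [hL0, hL1] at h6
  -- Cramer identity
  have hcram : ∀ w', ∑ i, Nf i w' * f i w' = hh w' * g j0 w' := by
    intro w'
    have hlast : ∀ i : Fin (m+1), Mw w' i (Fin.last m) = f i w' := by
      intro i
      simp [hMw, hzz, Fin.snoc_last]
    have hgl : g j0 (zz w' (Fin.last m)) = g j0 w' := by
      simp [hzz, Fin.snoc_last]
    have hswap : ∑ i, Nf i w' * Mw w' i (Fin.last m)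
        = ∑ m', g j0 (zz w' m') * ((Matrix.adjugate (Mw w') * Mw w') m' (Fin.last m)) := by
      simp only [hNf, Finset.sum_mul]
      rw [Finset.sum_comm]
      refine Finset.sum_congr rfl fun m' _ => ?_
      rw [Matrix.mul_apply, Finset.mul_sum]
      refine Finset.sum_congr rfl fun i _ => ?_
      ring
    rw [Matrix.adjugate_mul] at hswap
    simp only [Matrix.smul_apply, Matrix.one_apply, smul_eq_mul, mul_ite, mul_one, mul_zero,
      Finset.sum_ite_eq' Finset.univ (Fin.last m)] at hswap
    simp only [hlast] at hswap
    rw [hswap]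
    simp [hgl, mul_comm, hhh]
  -- product-zero identity
  have hgz : ∀ w', hh z0 * g j0 w' - ∑ i, Nf i z0 * f i w' = 0 := by
    intro w'
    set D : (Fin n → ℂ) → ℂ := fun u => hh z0 * g j0 u - ∑ i, Nf i z0 * f i u with hD
    have hDdiff : Differentiable ℂ D := by
      apply Differentiable.sub
      · exact (hg j0).const_mul _
      · apply Differentiable.fun_sum
        intro i _
        exact (hf i).const_mul _
    have hD0 : ∀ u, hh u * D u = 0 := by
      intro u
      have h1 := hcram u
      have h2 : hh u * (hh z0 * g j0 u) = hh u * (∑ i, Nf i z0 * f i u) :=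
        calc hh u * (hh z0 * g j0 u) = hh z0 * (hh u * g j0 u) := by ring
          _ = hh z0 * ∑ i, Nf i u * f i u := by rw [h1]
          _ = ∑ i, (Nf i u * hh z0) * f i u := by
              rw [Finset.mul_sum]
              exact Finset.sum_congr rfl fun i _ => by ring
          _ = ∑ i, (Nf i z0 * hh u) * f i u := by
              exact Finset.sum_congr rfl fun i _ => by rw [hprop i u]
          _ = hh u * ∑ i, Nf i z0 * f i u := by
              rw [Finset.mul_sum]
              exact Finset.sum_congr rfl fun i _ => by ring
      rw [hD]
      simp only [mul_sub]
      rw [h2, sub_self]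
    set L : ℂ → (Fin n → ℂ) := fun t => z0 + t • (w' - z0) with hL
    have hLdiff : Differentiable ℂ L := by
      apply Differentiable.const_add
      exact differentiable_id.smul_const _
    have hL0 : L 0 = z0 := by simp [hL]
    have hL1 : L 1 = w' := by simp [hL]
    have := aux_zero (fun t => D (L t)) (fun t => hh (L t))
      ((hDdiff.comp hLdiff).continuous) (hhdiff.comp hLdiff)
      (fun t => by show D (L t) * hh (L t) = 0; rw [mul_comm]; exact hD0 (L t))
      (by show hh (L 0) ≠ 0; rw [hL0]; exact hz0ne)
    have h4 : D (L 1) = 0 := this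
    rw [hL1] at h4
    exact h4
  -- contradiction with linear independence
  set c : (Fin (m + 1)) ⊕ (Fin q) → ℂ :=
    Sum.elim (fun i => Nf i z0) (fun j => if j = j0 then -(hh z0) else 0) with hc
  have hsum0 : ∑ s, c s • Sum.elim f g s = 0 := by
    funext x
    rw [Finset.sum_apply]
    rw [Fintype.sum_sum_type]
    simp only [hc, Sum.elim_inl, Sum.elim_inr, Pi.smul_apply, smul_eq_mul, Pi.zero_apply,
      ite_mul, zero_mul, neg_mul]
    rw [Finset.sum_ite_eq' Finset.univ j0]
    simp only [Finset.mem_univ, if_true]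
    linear_combination -hgz x
  have hzero := Fintype.linearIndependent_iff.mp hind c hsum0 (Sum.inr j0)
  simp only [hc, Sum.elim_inr, if_pos rfl] at hzero
  exact hz0ne (neg_eq_zero.mp hzero)
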